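/- (Lemma characterizing contact curves.) Let n(t) = (z₀(t), z₁(t), z₂(t)) be a differentiable curve in ℂ³ whose values are null vectors (nonzero, with |z₁(t)|² + |z₂(t)|² = |z₀(t)|²), and set w(t) = (z₁(t)/z₀(t), z₂(t)/z₀(t)) ∈ S³ ⊂ ℂ². Then for every t, ⟨n′(t), i·n(t)⟩ = 0 if and only if ⟨w′(t), i·w(t)⟩ = 0; that is, the projectivized curve in the null cone satisfies the lifted contact condition if and only if the corresponding curve in S³ satisfies the standard contact condition (its tangent is orthogonal to the Hopf fibre direction i·w). -/

import Mathlib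

/-- Lemma characterizing contact curves: for a differentiable curve
`n(t) = (z₀(t), z₁(t), z₂(t))` of null vectors (nonzero,
`|z₁|² + |z₂|² = |z₀|²`) with projection
`w(t) = (z₁(t)/z₀(t), z₂(t)/z₀(t)) ∈ S³ ⊂ ℂ²`, one has, at every `t`,
`⟨n′(t), i·n(t)⟩ = 0` iff `⟨w′(t), i·w(t)⟩ = 0`; i.e. the lifted contact
condition `Re(−i(z̄₁z₁′ + z̄₂z₂′ − z̄₀z₀′)) = 0` holds iff the curve in `S³`
satisfies the standard contact condition `Re(−i(w̄₁w₁′ + w̄₂w₂′)) = 0`. -/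
theorem contact_curve_characterization (z₀ z₁ z₂ : ℝ → ℂ)
    (hd₀ : Differentiable ℝ z₀) (hd₁ : Differentiable ℝ z₁)
    (hd₂ : Differentiable ℝ z₂)
    (hnz : ∀ t, (z₀ t, z₁ t, z₂ t) ≠ (0, 0, 0))
    (hnull : ∀ t, ‖z₁ t‖ ^ 2 + ‖z₂ t‖ ^ 2 =
      ‖z₀ t‖ ^ 2) :
    ∀ t : ℝ,
      (-Complex.I * ((starRingEnd ℂ) (z₁ t) * deriv z₁ t +
          (starRingEnd ℂ) (z₂ t) * deriv z₂ t -
          (starRingEnd ℂ) (z₀ t) * deriv z₀ t)).re = 0 ↔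
      (-Complex.I * ((starRingEnd ℂ) (z₁ t / z₀ t) *
            deriv (fun s => z₁ s / z₀ s) t +
          (starRingEnd ℂ) (z₂ t / z₀ t) *
            deriv (fun s => z₂ s / z₀ s) t)).re = 0 := by
  intro t
  have hz0 : z₀ t ≠ 0 := by
    intro h
    have h1 : ‖z₁ t‖ ^ 2 + ‖z₂ t‖ ^ 2 = 0 := by
      rw [hnull t, h]; simp
    have hb : ‖z₁ t‖ = 0 := by nlinarith [norm_nonneg (z₁ t), norm_nonneg (z₂ t), sq_nonneg (‖z₁ t‖), sq_nonneg (‖z₂ t‖)]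
    have hc : ‖z₂ t‖ = 0 := by nlinarith [norm_nonneg (z₁ t), norm_nonneg (z₂ t)]
    exact hnz t (by simp [h, norm_eq_zero.mp hb, norm_eq_zero.mp hc])
  set a := z₀ t
  set b := z₁ t
  set c := z₂ t
  set a' := deriv z₀ t
  set b' := deriv z₁ t
  set c' := deriv z₂ t
  have hder₁ : deriv (fun s => z₁ s / z₀ s) t = (b' * a - b * a') / a ^ 2 :=
    deriv_div (hd₁ t) (hd₀ t) hz0
  have hder₂ : deriv (fun s => z₂ s / z₀ s) t = (c' * a - c * a') / a ^ 2 :=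
    deriv_div (hd₂ t) (hd₀ t) hz0
  have hza : (starRingEnd ℂ) a ≠ 0 := by simpa using hz0
  -- null condition as complex identity
  have hnullC : (starRingEnd ℂ) b * b + (starRingEnd ℂ) c * c = (starRingEnd ℂ) a * a := by
    have := hnull t
    rw [Complex.sq_norm, Complex.sq_norm, Complex.sq_norm] at this
    have := congrArg (Complex.ofReal) this
    push_cast at this
    simpa [Complex.normSq_eq_conj_mul_self] using this
  have key : (starRingEnd ℂ) (b / a) * ((b' * a - b * a') / a ^ 2) +
      (starRingEnd ℂ) (c / a) * ((c' * a - c * a') / a ^ 2) =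
      ((starRingEnd ℂ) b * b' + (starRingEnd ℂ) c * c' - (starRingEnd ℂ) a * a') /
        ((Complex.normSq a : ℝ) : ℂ) := by
    rw [Complex.normSq_eq_conj_mul_self]
    simp only [map_div₀]
    field_simp
    linear_combination (-a') * hnullC
  rw [hder₁, hder₂, key]
  rw [← mul_div_assoc, Complex.div_ofReal_re]
  have hpos : (0:ℝ) < Complex.normSq a := Complex.normSq_pos.mpr hz0
  constructor
  · intro h; rw [h]; simp
  · intro h
    exact (div_eq_zero_iff.mp h).resolve_right (ne_of_gt hpos)
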